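/- Let X be a real Hilbert space and Ψ : X → ℝ a continuously Fréchet differentiable functional such that: (i) Ψ(w) ≤ b·(1 + ‖w‖^l) for all w ∈ X, for some constants b > 0 and 0 < l < 2; (ii) for every bounded sequence {w_j} ⊂ X converging weakly to some w_∞ ∈ X, one has Ψ'(w_j)(w_j − w_∞) → 0 as j → +∞. Then for every λ > 0 the functional J_λ(w) := (1/2)‖w‖² − λΨ(w) is bounded from below, coercive (J_λ(w) → +∞ as ‖w‖ → +∞), and satisfies the Palais–Smale condition. -/

import Mathlib

open Filter Topology

lemma rpow_growth_aux {b l lam : ℝ} (hb : 0 < b) (hl0 : 0 < l) (hl2 : l < 2)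
    (hlam : 0 < lam) : ∃ C : ℝ, ∀ t : ℝ, 0 ≤ t →
    lam * (b * (1 + t ^ l)) ≤ (1/4) * t ^ (2:ℕ) + C := by
  set T : ℝ := (4 * lam * b) ^ (2 - l)⁻¹ with hTdef
  have h4 : (0:ℝ) < 4 * lam * b := by positivity
  have hT : 0 < T := Real.rpow_pos_of_pos h4 _
  have hTpow : T ^ (2 - l) = 4 * lam * b :=
    Real.rpow_inv_rpow h4.le (by linarith)
  refine ⟨lam * (b * (1 + T ^ l)), fun t ht => ?_⟩
  have key : t ^ l ≤ T ^ l + T ^ (l - 2) * t ^ (2:ℕ) := by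
    rcases le_total t T with h | h
    · have h1 : t ^ l ≤ T ^ l := Real.rpow_le_rpow ht h hl0.le
      nlinarith [Real.rpow_nonneg hT.le (l-2), sq_nonneg t,
        mul_nonneg (Real.rpow_nonneg hT.le (l-2)) (sq_nonneg t)]
    · have ht0 : 0 < t := lt_of_lt_of_le hT h
      have h1 : t ^ (l - 2) ≤ T ^ (l - 2) :=
        Real.rpow_le_rpow_of_nonpos hT h (by linarith)
      have h2 : t ^ l = t ^ (2:ℕ) * t ^ (l - 2) := by
        rw [← Real.rpow_natCast t 2, ← Real.rpow_add ht0]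
        ring_nf
      rw [h2]
      nlinarith [mul_le_mul_of_nonneg_left h1 (sq_nonneg t),
        Real.rpow_nonneg hT.le l]
  have hTl2 : lam * b * T ^ (l - 2) = 1 / 4 := by
    have : T ^ (l - 2) = (T ^ (2 - l))⁻¹ := by
      rw [← Real.rpow_neg hT.le]; ring_nf
    rw [this, hTpow]
    field_simp
  nlinarith [mul_le_mul_of_nonneg_left key (by positivity : (0:ℝ) ≤ lam * b)]

lemma exists_weak_subseq {X : Type*} [NormedAddCommGroup X] [InnerProductSpace ℝ X]
    [CompleteSpace X] (z : ℕ → X) (M : ℝ) (hM : ∀ j, ‖z j‖ ≤ M) :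
    ∃ (w : X) (σ : ℕ → ℕ), StrictMono σ ∧
      ∀ f : X →L[ℝ] ℝ, Tendsto (fun j => f (z (σ j))) atTop (𝓝 (f w)) := by
  have hM0 : 0 ≤ M := (norm_nonneg (z 0)).trans (hM 0)
  -- Step 1: diagonal subsequence via sequential compactness of [-M²,M²]^ℕ
  set g : ℕ → (ℕ → ℝ) := fun j n => (inner ℝ (z n) (z j) : ℝ) with hg
  have hgS : ∀ j, g j ∈ Set.pi Set.univ (fun _ : ℕ => Set.Icc (-(M*M)) (M*M)) := by
    intro j n _
    have := abs_real_inner_le_norm (z n) (z j)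
    have h2 : ‖z n‖ * ‖z j‖ ≤ M * M :=
      mul_le_mul (hM n) (hM j) (norm_nonneg _) hM0
    constructor <;> [linarith [neg_abs_le ((inner ℝ (z n) (z j) : ℝ))];
      linarith [le_abs_self ((inner ℝ (z n) (z j) : ℝ))]]
  have hcmp : IsSeqCompact (Set.pi Set.univ (fun _ : ℕ => Set.Icc (-(M*M)) (M*M))) :=
    (isCompact_univ_pi fun _ => isCompact_Icc).isSeqCompact
  obtain ⟨x, -, σ, hσ, hconv⟩ := hcmp (fun j => hgS j)
  rw [tendsto_pi_nhds] at hconv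
  -- hconv : ∀ n, Tendsto (fun j => ⟪z n, z (σ j)⟫) atTop (𝓝 (x n))
  -- Step 2: the inner ℝ products converge for every v
  have hcauchy : ∀ v : X, CauchySeq (fun j => (inner ℝ v (z (σ j)) : ℝ)) := by
    -- first on the span
    have hspan : ∀ v ∈ Submodule.span ℝ (Set.range z),
        ∃ c : ℝ, Tendsto (fun j => (inner ℝ v (z (σ j)) : ℝ)) atTop (𝓝 c) := by
      intro v hv
      induction hv using Submodule.span_induction with
      | mem v hvmem =>
        obtain ⟨n, rfl⟩ := hvmem
        exact ⟨x n, hconv n⟩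
      | zero => exact ⟨0, by simpa using tendsto_const_nhds⟩
      | add u v hu hv ihu ihv =>
        obtain ⟨c, hc⟩ := ihu; obtain ⟨d, hd⟩ := ihv
        exact ⟨c + d, by simpa [inner_add_left] using hc.add hd⟩
      | smul a v hv ihv =>
        obtain ⟨c, hc⟩ := ihv
        exact ⟨a * c, by simpa [real_inner_smul_left] using hc.const_mul a⟩
    -- then on the closure of the span
    set Y := (Submodule.span ℝ (Set.range z)).topologicalClosure with hY
    have hYc : ∀ v ∈ Y, CauchySeq (fun j => (inner ℝ v (z (σ j)) : ℝ)) := by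
      intro v hv
      rw [Metric.cauchySeq_iff]
      intro ε hε
      have hε3 : 0 < ε / 3 := by linarith
      obtain ⟨v', hv', hvv'⟩ : ∃ v' ∈ Submodule.span ℝ (Set.range z),
          ‖v - v'‖ < ε / 3 / (M + 1) := by
        have : v ∈ closure ((Submodule.span ℝ (Set.range z) : Submodule ℝ X) : Set X) := hv
        rw [Metric.mem_closure_iff] at this
        obtain ⟨v', hv', hd⟩ := this (ε / 3 / (M + 1)) (div_pos hε3 (by linarith))
        exact ⟨v', hv', by rwa [dist_eq_norm] at hd⟩
      obtain ⟨c, hc⟩ := hspan v' hv'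
      have := hc.cauchySeq
      rw [Metric.cauchySeq_iff] at this
      obtain ⟨N, hN⟩ := this _ hε3
      refine ⟨N, fun m hm n hn => ?_⟩
      have key : ∀ k, |(inner ℝ v (z (σ k)) : ℝ) - inner ℝ v' (z (σ k))| ≤ ε / 3 := by
        intro k
        rw [← inner_sub_left]
        calc |(inner ℝ (v - v') (z (σ k)) : ℝ)| ≤ ‖v - v'‖ * ‖z (σ k)‖ :=
              abs_real_inner_le_norm _ _
          _ ≤ (ε / 3 / (M + 1)) * (M + 1) := by
              apply mul_le_mul hvv'.le ((hM _).trans (by linarith)) (norm_nonneg _)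
                (by positivity)
          _ = ε / 3 := by field_simp
      have hmn := hN m hm n hn
      rw [Real.dist_eq] at hmn ⊢
      have k1 := key m; have k2 := key n
      have : |(inner ℝ v (z (σ m)) : ℝ) - inner ℝ v (z (σ n))| ≤
          |(inner ℝ v (z (σ m)) : ℝ) - inner ℝ v' (z (σ m))| +
          |(inner ℝ v' (z (σ m)) : ℝ) - inner ℝ v' (z (σ n))| +
          |(inner ℝ v' (z (σ n)) : ℝ) - inner ℝ v (z (σ n))| := by
        have := abs_sub_le ((inner ℝ v (z (σ m)) : ℝ)) (inner ℝ v' (z (σ m)))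
          (inner ℝ v (z (σ n)))
        have h2 := abs_sub_le ((inner ℝ v' (z (σ m)) : ℝ)) (inner ℝ v' (z (σ n)))
          (inner ℝ v (z (σ n)))
        linarith
      rw [abs_sub_comm ((inner ℝ v' (z (σ n)) : ℝ))] at this
      linarith
    -- finally on all of X via orthogonal projection
    intro v
    haveI : CompleteSpace Y :=
      (Submodule.isClosed_topologicalClosure _).completeSpace_coe
    have hproj : ∀ k, (inner ℝ v (z k) : ℝ) = inner ℝ (Y.orthogonalProjectionOnto v : X) (z k) := by
      intro k
      have hzY : z k ∈ Y := Submodule.le_topologicalClosure _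
        (Submodule.subset_span (Set.mem_range_self k))
      have horth : (inner ℝ (v - Y.orthogonalProjectionOnto v) (z k) : ℝ) = 0 :=
        Y.starProjection_inner_eq_zero v (z k) hzY
      have := inner_sub_left (𝕜 := ℝ) v (Y.orthogonalProjectionOnto v : X) (z k)
      rw [horth] at this
      linarith [this]
    have := hYc (Y.orthogonalProjectionOnto v : X) (Submodule.coe_mem _)
    simpa only [← hproj] using this
  -- Step 3: build the weak limit
  choose c hc using fun v => cauchySeq_tendsto_of_complete (hcauchy v)
  have hc' : Tendsto (fun j (v : X) => (innerSL ℝ (z (σ j))) v) atTop (𝓝 c) := by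
    rw [tendsto_pi_nhds]
    intro v
    simpa [real_inner_comm] using hc v
  have hbdd : Bornology.IsBounded (Set.range fun j => innerSL ℝ (z (σ j))) := by
    rw [isBounded_iff_forall_norm_le]
    exact ⟨M, by rintro _ ⟨j, rfl⟩; simpa using (innerSL_apply_norm ℝ (z (σ j))).le.trans (hM _)⟩
  set G : X →L[ℝ] ℝ := ContinuousLinearMap.ofTendstoOfBoundedRange c _ hc' hbdd with hG
  refine ⟨(InnerProductSpace.toDual ℝ X).symm G, σ, hσ, fun f => ?_⟩
  set u := (InnerProductSpace.toDual ℝ X).symm f with hu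
  have hfu : ∀ y : X, f y = (inner ℝ u y : ℝ) := by
    intro y; rw [hu, InnerProductSpace.toDual_symm_apply]
  have hGc : ∀ v, G v = c v := fun v => rfl
  have : f ((InnerProductSpace.toDual ℝ X).symm G) = c u := by
    rw [hfu, real_inner_comm, InnerProductSpace.toDual_symm_apply, hGc]
  rw [this]
  simpa [hfu] using hc u

/-- In a real Hilbert space, if `Ψ` is `C¹` with `Ψ(w) ≤ b(1 + ‖w‖^l)` (`b > 0`,
`0 < l < 2`) and `Ψ'(w_j)(w_j − w_∞) → 0` along bounded weakly convergent sequences, then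
for every `λ > 0` the functional `J_λ(w) = (1/2)‖w‖² − λΨ(w)` is bounded from below,
coercive, and satisfies the Palais–Smale condition. (The Fréchet derivative of `J_λ` at
`w` is `⟨w, ·⟩ − λΨ'(w)`.) -/
theorem energy_functional_bddBelow_coercive_palaisSmale
    {X : Type*} [NormedAddCommGroup X] [InnerProductSpace ℝ X] [CompleteSpace X]
    (Ψ : X → ℝ) (Ψ' : X → (X →L[ℝ] ℝ))
    (hdiff : ∀ w : X, HasFDerivAt Ψ (Ψ' w) w) (hcont : Continuous Ψ')
    (b l : ℝ) (hb : 0 < b) (hl0 : 0 < l) (hl2 : l < 2)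
    (hgrowth : ∀ w : X, Ψ w ≤ b * (1 + ‖w‖ ^ l))
    (hweak : ∀ (u : ℕ → X) (wlim : X), Bornology.IsBounded (Set.range u) →
      (∀ f : X →L[ℝ] ℝ, Tendsto (fun j => f (u j)) atTop (𝓝 (f wlim))) →
      Tendsto (fun j => Ψ' (u j) (u j - wlim)) atTop (𝓝 (0 : ℝ)))
    (lam : ℝ) (hlam : 0 < lam) :
    BddBelow (Set.range fun w : X => (1 / 2 : ℝ) * ‖w‖ ^ 2 - lam * Ψ w) ∧
    Tendsto (fun w : X => (1 / 2 : ℝ) * ‖w‖ ^ 2 - lam * Ψ w)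
      (Filter.comap norm atTop) atTop ∧
    (∀ z : ℕ → X,
      (∃ μ : ℝ, Tendsto (fun j => (1 / 2 : ℝ) * ‖z j‖ ^ 2 - lam * Ψ (z j)) atTop (𝓝 μ)) →
      Tendsto (fun j => ‖((innerSL ℝ (z j) : X →L[ℝ] ℝ) - lam • Ψ' (z j))‖) atTop
        (𝓝 (0 : ℝ)) →
      ∃ (w : X) (σ : ℕ → ℕ), StrictMono σ ∧ Tendsto (fun j => z (σ j)) atTop (𝓝 w)) := by
  obtain ⟨C, hC⟩ := rpow_growth_aux hb hl0 hl2 hlam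
  have hJlb : ∀ w : X, (1/4 : ℝ) * ‖w‖ ^ 2 - C ≤ (1 / 2 : ℝ) * ‖w‖ ^ 2 - lam * Ψ w := by
    intro w
    have h1 : lam * Ψ w ≤ lam * (b * (1 + ‖w‖ ^ l)) :=
      mul_le_mul_of_nonneg_left (hgrowth w) hlam.le
    have h2 := hC ‖w‖ (norm_nonneg w)
    nlinarith [sq_nonneg ‖w‖]
  refine ⟨⟨-C, ?_⟩, ?_, ?_⟩
  · rintro _ ⟨w, rfl⟩
    have := hJlb w
    nlinarith [sq_nonneg ‖w‖]
  · have h1 : Tendsto (fun t : ℝ => (1/4 : ℝ) * t ^ 2 - C) atTop atTop := by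
      apply tendsto_atTop_add_const_right
      exact (tendsto_pow_atTop two_ne_zero).const_mul_atTop (by norm_num)
    have h2 : Tendsto (norm : X → ℝ) (Filter.comap norm atTop) atTop := tendsto_comap
    exact tendsto_atTop_mono (fun w => hJlb w) (h1.comp h2)
  · rintro z ⟨μ, hμ⟩ hPS
    -- boundedness of the sequence
    obtain ⟨N, hN⟩ := (hμ.eventually (eventually_le_nhds (lt_add_one μ))).exists_forall_of_atTop
    have hbd : ∀ j, N ≤ j → ‖z j‖ ≤ Real.sqrt (4 * (μ + 1 + C)) := by
      intro j hj
      have h1 := hN j hj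
      have h2 := hJlb (z j)
      have h3 : ‖z j‖ ^ 2 ≤ 4 * (μ + 1 + C) := by nlinarith
      calc ‖z j‖ = Real.sqrt (‖z j‖ ^ 2) := (Real.sqrt_sq (norm_nonneg _)).symm
        _ ≤ Real.sqrt (4 * (μ + 1 + C)) := Real.sqrt_le_sqrt h3
    set M : ℝ := max (Real.sqrt (4 * (μ + 1 + C)))
      (((Finset.range (N + 1)).sup' (by simp) fun i => ‖z i‖)) with hMdef
    have hMj : ∀ j, ‖z j‖ ≤ M := by
      intro j
      rcases le_or_gt N j with h | h
      · exact (hbd j h).trans (le_max_left _ _)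
      · refine le_trans ?_ (le_max_right _ _)
        exact Finset.le_sup' (fun i => ‖z i‖) (Finset.mem_range.2 (by omega))
    obtain ⟨w, σ, hσ, hwc⟩ := exists_weak_subseq z M hMj
    refine ⟨w, σ, hσ, ?_⟩
    have hbdd : Bornology.IsBounded (Set.range fun j => z (σ j)) := by
      rw [isBounded_iff_forall_norm_le]
      exact ⟨M, by rintro _ ⟨j, rfl⟩; exact hMj _⟩
    have hΨ' : Tendsto (fun j => Ψ' (z (σ j)) (z (σ j) - w)) atTop (𝓝 0) :=
      hweak (fun j => z (σ j)) w hbdd hwc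
    have hPSσ : Tendsto (fun j => ‖((innerSL ℝ (z (σ j)) : X →L[ℝ] ℝ) -
        lam • Ψ' (z (σ j)))‖) atTop (𝓝 0) := hPS.comp hσ.tendsto_atTop
    -- first piece
    have ht1 : Tendsto (fun j => ((innerSL ℝ (z (σ j)) : X →L[ℝ] ℝ) -
        lam • Ψ' (z (σ j))) (z (σ j) - w)) atTop (𝓝 0) := by
      apply squeeze_zero_norm (a := fun j => ‖((innerSL ℝ (z (σ j)) : X →L[ℝ] ℝ) -
        lam • Ψ' (z (σ j)))‖ * (M + ‖w‖))
      · intro j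
        calc ‖((innerSL ℝ (z (σ j)) : X →L[ℝ] ℝ) - lam • Ψ' (z (σ j))) (z (σ j) - w)‖
            ≤ ‖((innerSL ℝ (z (σ j)) : X →L[ℝ] ℝ) - lam • Ψ' (z (σ j)))‖ * ‖z (σ j) - w‖ :=
              ContinuousLinearMap.le_opNorm _ _
          _ ≤ _ := by
              apply mul_le_mul_of_nonneg_left _ (norm_nonneg _)
              calc ‖z (σ j) - w‖ ≤ ‖z (σ j)‖ + ‖w‖ := norm_sub_le _ _
                _ ≤ M + ‖w‖ := by linarith [hMj (σ j)]
      · simpa using hPSσ.mul_const (M + ‖w‖)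
    have hA : Tendsto (fun j => (inner ℝ (z (σ j)) (z (σ j) - w) : ℝ)) atTop (𝓝 0) := by
      have h := ht1.add (hΨ'.const_mul lam)
      rw [show (0 : ℝ) + lam * 0 = 0 by ring] at h
      refine h.congr fun j => ?_
      simp [ContinuousLinearMap.sub_apply, ContinuousLinearMap.smul_apply]
    have hB : Tendsto (fun j => (inner ℝ w (z (σ j) - w) : ℝ)) atTop (𝓝 0) := by
      have h := (hwc (innerSL ℝ w)).sub_const (inner ℝ w w : ℝ)
      simp only [innerSL_apply_apply, sub_self] at h
      refine h.congr fun j => ?_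
      rw [inner_sub_right]
    have hsq : Tendsto (fun j => ‖z (σ j) - w‖ ^ 2) atTop (𝓝 0) := by
      have h := hA.sub hB
      rw [sub_zero] at h
      refine h.congr fun j => ?_
      rw [← inner_sub_left, real_inner_self_eq_norm_sq]
    rw [tendsto_iff_norm_sub_tendsto_zero]
    have h := (Real.continuous_sqrt.tendsto 0).comp hsq
    simp only [Real.sqrt_zero] at h
    refine h.congr fun j => ?_
    simp [Real.sqrt_sq (norm_nonneg _)]
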